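/- For every integer d ≥ 3 there is a constant C(d) > 0 such that for all n ≥ 1, ∫₀^π θ^4 v_n(θ) (sin θ)^{2λ} dθ ≤ C(d) n^{−2}, where λ = (d−2)/2 and v_n(θ) = (cos(θ/2))^{2n}/I_{n,d}. -/

import Mathlib

open Real

lemma contK (p q : ℕ) : Continuous (fun θ : ℝ => Real.sin (θ/2) ^ p * Real.cos (θ/2) ^ q) :=
  ((Real.continuous_sin.comp (continuous_id.div_const 2)).pow p).mul
    ((Real.continuous_cos.comp (continuous_id.div_const 2)).pow q)

lemma Kpos (p q : ℕ) :
    0 < ∫ θ in (0:ℝ)..π, Real.sin (θ/2) ^ p * Real.cos (θ/2) ^ q := by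
  apply intervalIntegral.intervalIntegral_pos_of_pos_on
    ((contK p q).intervalIntegrable 0 π)
  · intro x hx
    have h1 : 0 < Real.sin (x/2) := Real.sin_pos_of_pos_of_lt_pi (by linarith [hx.1])
      (by linarith [hx.2, Real.pi_pos])
    have h2 : 0 < Real.cos (x/2) := Real.cos_pos_of_mem_Ioo
      ⟨by linarith [hx.1, Real.pi_pos], by linarith [hx.2]⟩
    positivity
  · exact Real.pi_pos

lemma reduction (a b : ℕ) :
    (∫ θ in (0:ℝ)..π, Real.sin (θ/2) ^ (a+2) * Real.cos (θ/2) ^ b) * ((a:ℝ) + b + 2)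
      = ((a:ℝ) + 1) * ∫ θ in (0:ℝ)..π, Real.sin (θ/2) ^ a * Real.cos (θ/2) ^ b := by
  have key : (∫ θ in (0:ℝ)..π,
      (((a:ℝ)+1)/2 * (Real.sin (θ/2) ^ a * Real.cos (θ/2) ^ (b+2))
        - ((b:ℝ)+1)/2 * (Real.sin (θ/2) ^ (a+2) * Real.cos (θ/2) ^ b))) = 0 := by
    have hderiv : ∀ x ∈ Set.uIcc (0:ℝ) π,
        HasDerivAt (fun θ => Real.sin (θ/2) ^ (a+1) * Real.cos (θ/2) ^ (b+1))
          (((a:ℝ)+1)/2 * (Real.sin (x/2) ^ a * Real.cos (x/2) ^ (b+2))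
            - ((b:ℝ)+1)/2 * (Real.sin (x/2) ^ (a+2) * Real.cos (x/2) ^ b)) x := by
      intro x _
      have hhalf : HasDerivAt (fun θ : ℝ => θ/2) (1/2) x := by
        simpa using (hasDerivAt_id x).div_const 2
      have hs : HasDerivAt (fun θ : ℝ => Real.sin (θ/2)) (Real.cos (x/2) * (1/2)) x :=
        hhalf.sin
      have hc : HasDerivAt (fun θ : ℝ => Real.cos (θ/2)) (-Real.sin (x/2) * (1/2)) x :=
        hhalf.cos
      have h : HasDerivAt (fun θ => Real.sin (θ/2) ^ (a+1) * Real.cos (θ/2) ^ (b+1)) _ x :=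
        (hs.pow (a+1)).mul (hc.pow (b+1))
      convert h using 1
      simp only [Nat.add_sub_cancel, Pi.pow_apply]
      push_cast
      ring
    have hint : IntervalIntegrable (fun θ : ℝ =>
        (((a:ℝ)+1)/2 * (Real.sin (θ/2) ^ a * Real.cos (θ/2) ^ (b+2))
          - ((b:ℝ)+1)/2 * (Real.sin (θ/2) ^ (a+2) * Real.cos (θ/2) ^ b))) MeasureTheory.volume 0 π :=
      (((continuous_const.mul (contK a (b+2))).sub
        (continuous_const.mul (contK (a+2) b)))).intervalIntegrable 0 π
    rw [intervalIntegral.integral_eq_sub_of_hasDerivAt hderiv hint]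
    simp
  have hsub : (∫ θ in (0:ℝ)..π,
      (((a:ℝ)+1)/2 * (Real.sin (θ/2) ^ a * Real.cos (θ/2) ^ (b+2))
        - ((b:ℝ)+1)/2 * (Real.sin (θ/2) ^ (a+2) * Real.cos (θ/2) ^ b)))
      = ((a:ℝ)+1)/2 * (∫ θ in (0:ℝ)..π, Real.sin (θ/2) ^ a * Real.cos (θ/2) ^ (b+2))
        - ((b:ℝ)+1)/2 * (∫ θ in (0:ℝ)..π, Real.sin (θ/2) ^ (a+2) * Real.cos (θ/2) ^ b) := by
    rw [intervalIntegral.integral_sub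
        (f := fun θ => ((a:ℝ)+1)/2 * (Real.sin (θ/2) ^ a * Real.cos (θ/2) ^ (b+2)))
        (g := fun θ => ((b:ℝ)+1)/2 * (Real.sin (θ/2) ^ (a+2) * Real.cos (θ/2) ^ b))
        ((continuous_const.mul (contK a (b+2))).intervalIntegrable 0 π)
        ((continuous_const.mul (contK (a+2) b)).intervalIntegrable 0 π),
      intervalIntegral.integral_const_mul, intervalIntegral.integral_const_mul]
  have hsplit : (∫ θ in (0:ℝ)..π, Real.sin (θ/2) ^ a * Real.cos (θ/2) ^ (b+2))
      = (∫ θ in (0:ℝ)..π, Real.sin (θ/2) ^ a * Real.cos (θ/2) ^ b)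
        - ∫ θ in (0:ℝ)..π, Real.sin (θ/2) ^ (a+2) * Real.cos (θ/2) ^ b := by
    rw [← intervalIntegral.integral_sub ((contK a b).intervalIntegrable 0 π)
        ((contK (a+2) b).intervalIntegrable 0 π)]
    apply intervalIntegral.integral_congr
    intro θ _
    have h := Real.sin_sq_add_cos_sq (θ/2)
    calc Real.sin (θ/2) ^ a * Real.cos (θ/2) ^ (b+2)
        = Real.sin (θ/2) ^ a * Real.cos (θ/2) ^ b * (Real.cos (θ/2) ^ 2) := by ring
      _ = Real.sin (θ/2) ^ a * Real.cos (θ/2) ^ b * (1 - Real.sin (θ/2) ^ 2) := by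
          rw [Real.cos_sq']
      _ = _ := by ring
  rw [hsub, hsplit] at key
  linear_combination -key * 2


/-- Lemma 2.2: `∫₀^π θ^4 v_n(θ) sin^{2λ} θ dθ ≤ C(d) n^{-2}`. -/
theorem vallee_poussin_fourth_moment (d : ℕ) (hd : 3 ≤ d) :
    ∃ C > (0:ℝ), ∀ n : ℕ, 1 ≤ n →
      (∫ θ in (0:ℝ)..π,
          θ ^ 4 *
            (Real.cos (θ/2) ^ (2*n) /
              ∫ t in (0:ℝ)..π, Real.cos (t/2) ^ (2*n) * Real.sin t ^ (d - 2)) *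
            Real.sin θ ^ (d - 2)) ≤
        C / (n:ℝ) ^ 2 := by
  set e := d - 2 with he
  have he1 : 1 ≤ e := by omega
  refine ⟨π ^ 4 * ((e:ℝ)+3) * ((e:ℝ)+1) / 4, by positivity, ?_⟩
  intro n hn
  have hn1 : (1:ℝ) ≤ (n:ℝ) := by exact_mod_cast hn
  set C : ℝ := π ^ 4 * ((e:ℝ)+3) * ((e:ℝ)+1) / 4 with hC
  set q := 2*n + e with hqdef
  set I : ℝ := ∫ t in (0:ℝ)..π, Real.cos (t/2) ^ (2*n) * Real.sin t ^ e with hIdef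
  set K : ℕ → ℝ := fun p => ∫ θ in (0:ℝ)..π, Real.sin (θ/2) ^ p * Real.cos (θ/2) ^ q with hKdef
  have hsin2 : ∀ θ : ℝ, Real.sin θ = 2 * Real.sin (θ/2) * Real.cos (θ/2) := by
    intro θ
    have h := Real.sin_two_mul (θ/2)
    rw [show 2*(θ/2) = θ by ring] at h
    linarith
  have hI : I = 2 ^ e * K e := by
    rw [hIdef, hKdef]
    rw [← intervalIntegral.integral_const_mul]
    apply intervalIntegral.integral_congr
    intro θ _
    dsimp only
    rw [hsin2 θ, hqdef]
    rw [mul_pow, mul_pow, pow_add]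
    ring
  have hKpos : ∀ p, 0 < K p := fun p => Kpos p q
  have hIpos : 0 < I := by
    rw [hI]; exact mul_pos (by positivity) (hKpos e)
  set N : ℝ := ∫ θ in (0:ℝ)..π, θ^4 * Real.cos (θ/2)^(2*n) * Real.sin θ ^ e with hNdef
  have hgoal : (∫ θ in (0:ℝ)..π, θ ^ 4 * (Real.cos (θ/2) ^ (2*n) / I) * Real.sin θ ^ e)
      = N * I⁻¹ := by
    rw [hNdef, ← intervalIntegral.integral_mul_const]
    apply intervalIntegral.integral_congr
    intro θ _
    ring
  have hbound : ∀ θ ∈ Set.Icc (0:ℝ) π,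
      θ^4 * Real.cos (θ/2)^(2*n) * Real.sin θ ^ e
        ≤ π^4 * 2^e * (Real.sin (θ/2)^(e+4) * Real.cos (θ/2)^q) := by
    intro θ hθ
    obtain ⟨h0, h1⟩ := hθ
    have hπ := Real.pi_pos
    have hs0 : 0 ≤ Real.sin (θ/2) :=
      Real.sin_nonneg_of_nonneg_of_le_pi (by linarith) (by linarith)
    have hc0 : 0 ≤ Real.cos (θ/2) :=
      Real.cos_nonneg_of_mem_Icc ⟨by linarith, by linarith⟩
    have hms := Real.mul_le_sin (x := θ/2) (by linarith) (by linarith)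
    have hts : θ ≤ π * Real.sin (θ/2) := by
      have h2 : π * (2/π*(θ/2)) = θ := by field_simp
      nlinarith [mul_le_mul_of_nonneg_left hms hπ.le]
    have h4 : θ^4 ≤ π^4 * Real.sin (θ/2)^4 := by
      calc θ^4 ≤ (π * Real.sin (θ/2))^4 := pow_le_pow_left₀ h0 hts 4
        _ = π^4 * Real.sin (θ/2)^4 := by ring
    have hrw : Real.cos (θ/2)^(2*n) * Real.sin θ ^ e
        = 2^e * Real.sin (θ/2)^e * Real.cos (θ/2)^(2*n+e) := by
      rw [hsin2 θ, mul_pow, mul_pow, pow_add]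
      ring
    calc θ^4 * Real.cos (θ/2)^(2*n) * Real.sin θ ^ e
        = θ^4 * (2^e * Real.sin (θ/2)^e * Real.cos (θ/2)^(2*n+e)) := by
          rw [mul_assoc, hrw]
      _ ≤ (π^4 * Real.sin (θ/2)^4) * (2^e * Real.sin (θ/2)^e * Real.cos (θ/2)^(2*n+e)) := by
          apply mul_le_mul_of_nonneg_right h4
          positivity
      _ = π^4 * 2^e * (Real.sin (θ/2)^(e+4) * Real.cos (θ/2)^q) := by
          rw [hqdef]
          ring
  have hN : N ≤ π^4 * 2^e * K (e+4) := by
    rw [hNdef, hKdef]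
    calc (∫ θ in (0:ℝ)..π, θ^4 * Real.cos (θ/2)^(2*n) * Real.sin θ ^ e)
        ≤ ∫ θ in (0:ℝ)..π, π^4 * 2^e * (Real.sin (θ/2)^(e+4) * Real.cos (θ/2)^q) := by
          apply intervalIntegral.integral_mono_on Real.pi_pos.le
          · exact (((continuous_pow 4).mul
              ((Real.continuous_cos.comp (continuous_id.div_const 2)).pow (2*n))).mul
              (Real.continuous_sin.pow e)).intervalIntegrable 0 π
          · exact (continuous_const.mul (contK (e+4) q)).intervalIntegrable 0 π
          · exact hbound
      _ = π^4 * 2^e * ∫ θ in (0:ℝ)..π, Real.sin (θ/2)^(e+4) * Real.cos (θ/2)^q :=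
          intervalIntegral.integral_const_mul _ _
  have r1 : K (e+4) * (((e+2:ℕ):ℝ) + q + 2) = (((e+2:ℕ):ℝ) + 1) * K (e+2) := reduction (e+2) q
  have r2 : K (e+2) * ((e:ℝ) + q + 2) = ((e:ℝ) + 1) * K e := reduction e q
  have hmain : 4*(n:ℝ)^2 * K (e+4) ≤ ((e:ℝ)+3)*((e:ℝ)+1)*K e := by
    have heq : ((e:ℝ)+q+4)*((e:ℝ)+q+2)*K (e+4) = ((e:ℝ)+3)*((e:ℝ)+1)*K e := by
      push_cast at r1
      linear_combination ((e:ℝ)+(q:ℝ)+2) * r1 + ((e:ℝ)+3) * r2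
    have hle : 4*(n:ℝ)^2 ≤ ((e:ℝ)+(q:ℝ)+4)*((e:ℝ)+(q:ℝ)+2) := by
      have hqc : (q:ℝ) = 2*(n:ℝ) + (e:ℝ) := by rw [hqdef]; push_cast; ring
      rw [hqc]
      have hen : (0:ℝ) ≤ (e:ℝ) := Nat.cast_nonneg e
      have hnn : (0:ℝ) ≤ (n:ℝ) := Nat.cast_nonneg n
      nlinarith
    calc 4*(n:ℝ)^2 * K (e+4) ≤ ((e:ℝ)+q+4)*((e:ℝ)+q+2) * K (e+4) :=
          mul_le_mul_of_nonneg_right hle (hKpos (e+4)).le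
      _ = _ := heq
  rw [hgoal, ← div_eq_mul_inv,
    div_le_div_iff₀ hIpos (by positivity : (0:ℝ) < (n:ℝ)^2)]
  calc N * (n:ℝ)^2 ≤ (π^4 * 2^e * K (e+4)) * (n:ℝ)^2 :=
        mul_le_mul_of_nonneg_right hN (by positivity)
    _ = (π^4 * 2^e / 4) * (4*(n:ℝ)^2 * K (e+4)) := by ring
    _ ≤ (π^4 * 2^e / 4) * (((e:ℝ)+3)*((e:ℝ)+1)*K e) :=
        mul_le_mul_of_nonneg_left hmain (by positivity)
    _ = C * I := by rw [hC, hI]; ring
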